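/- Let n ≥ 1, let ρ be a 2ⁿ×2ⁿ complex matrix with tr(ρ) = 1, and let O be a 2ⁿ×2ⁿ real symmetric matrix (O has real entries and Oᵀ = O), both indexed by bit strings in {0,1}ⁿ. Then tr(ρ O) = (2^{2n−1}/|ℬₙ|) Σ_{A ∈ ℬₙ} ⟨φ^{req}_A| ρ |φ^{req}_A⟩ ⟨φ^{req}_A| O |φ^{req}_A⟩ + Σ_{x ∈ {0,1}ⁿ} ρ_{xx} O_{xx} − (1/2) tr(O), where ⟨φ|M|φ⟩ := φ† M φ. -/

import Mathlib

open Finset Matrix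

/-- Bit strings of length `n`, with entries viewed as `0/1` integers via `Fin 2`. -/
abbrev Bits (n : ℕ) := Fin n → Fin 2

open Classical in
/-- The index set `ℬₙ`: upper-triangular `n × n` matrices with entries in `{0,1}`
(`a_{ij} = 0` for `i > j`). -/
noncomputable def Bn (n : ℕ) : Finset (Matrix (Fin n) (Fin n) (Fin 2)) :=
  Finset.univ.filter fun A => ∀ i j : Fin n, j < i → A i j = 0

/-- The quadratic form `xᵀ A x` (its parity is what matters). -/
def quadB {n : ℕ} (A : Matrix (Fin n) (Fin n) (Fin 2)) (x : Bits n) : ℕ :=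
  ∑ i, ∑ j, (A i j : ℕ) * (x i : ℕ) * (x j : ℕ)

/-- The real equatorial stabilizer state `φ^{req}_A`. -/
noncomputable def phiReq {n : ℕ} (A : Matrix (Fin n) (Fin n) (Fin 2)) (x : Bits n) : ℂ :=
  (-1 : ℂ) ^ quadB A x / (Real.sqrt (2 ^ n) : ℂ)

/-- The sandwich `⟨φ|M|φ⟩ = φ† M φ`. -/
noncomputable def braket {ι : Type*} [Fintype ι] (φ : ι → ℂ) (M : Matrix ι ι ℂ) : ℂ :=
  star φ ⬝ᵥ (M *ᵥ φ)

namespace RA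
lemma c2_inj : ∀ a b : Fin 2, ((a : ℕ) : ZMod 2) = ((b : ℕ) : ZMod 2) → a = b := by decide
lemma c2_sq : ∀ a : Fin 2, ((a : ℕ) : ZMod 2) * ((a : ℕ) : ZMod 2) = ((a : ℕ) : ZMod 2) := by decide
lemma zmod2_ne_zero : ∀ t : ZMod 2, t ≠ 0 → t = 1 := by decide
lemma mul_eq_one2 : ∀ s t : ZMod 2, s * t = 1 → s = 1 ∧ t = 1 := by decide
lemma key6 : ∀ Xi Xj Yi Yj Ui Uj : ZMod 2,
    Xi*Xj + Yi*Yj + Ui*Uj + (Xi+Yi+Ui)*(Xj+Yj+Uj) = 0 →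
    (Xi+Yi)*(Xj+Uj) = (Xj+Yj)*(Xi+Ui) := by decide
lemma diag4 : ∀ a b c d : ZMod 2, a + b + c + d = 0 → d = a + b + c := by decide
lemma l2 : ∀ a b c : ZMod 2, a + b = 0 → a + b + c = c := by decide
lemma l3 : ∀ a b c : ZMod 2, a + c = 0 → a + b + c = b := by decide
lemma l4 : ∀ a b c : ZMod 2, b = c → a + b + c = a := by decide
lemma addc : ∀ a b : ZMod 2, a + b = 0 → a = b := by decide
lemma c2_add_one : ∀ a : Fin 2, (((a + 1 : Fin 2) : ℕ) : ZMod 2) = ((a : ℕ) : ZMod 2) + 1 := by decide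

lemma neg_one_pow_eq (m : ℕ) : (-1 : ℂ)^m = if (m : ZMod 2) = 0 then 1 else -1 := by
  induction m with
  | zero => simp
  | succ k ih =>
    rw [pow_succ, ih]
    by_cases h : (k : ZMod 2) = 0
    · have h1 : ((k+1 : ℕ) : ZMod 2) = 1 := by push_cast [h]; ring
      simp [h, h1]
    · have hk : (k : ZMod 2) = 1 := zmod2_ne_zero _ h
      have h1 : ((k+1 : ℕ) : ZMod 2) = 0 := by push_cast [hk]; decide
      simp [h, h1]

variable {n : ℕ}

def coefZ (x y u v : Bits n) (i j : Fin n) : ZMod 2 :=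
  ((x i : ℕ) : ZMod 2) * ((x j : ℕ) : ZMod 2) + ((y i : ℕ) : ZMod 2) * ((y j : ℕ) : ZMod 2)
    + ((u i : ℕ) : ZMod 2) * ((u j : ℕ) : ZMod 2) + ((v i : ℕ) : ZMod 2) * ((v j : ℕ) : ZMod 2)

def coefN (x y u v : Bits n) (i j : Fin n) : ℕ :=
  (x i : ℕ) * (x j : ℕ) + (y i : ℕ) * (y j : ℕ) + (u i : ℕ) * (u j : ℕ) + (v i : ℕ) * (v j : ℕ)

lemma coefN_cast (x y u v : Bits n) (i j : Fin n) :
    ((coefN x y u v i j : ℕ) : ZMod 2) = coefZ x y u v i j := by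
  unfold coefN coefZ; push_cast; ring

lemma coefZ_symm (x y u v : Bits n) (i j : Fin n) :
    coefZ x y u v i j = coefZ x y u v j i := by unfold coefZ; ring

lemma cond_of_even (x y u v : Bits n)
    (h : ∀ i j : Fin n, i ≤ j → coefZ x y u v i j = 0) :
    (x = y ∧ u = v) ∨ (x = u ∧ y = v) ∨ (x = v ∧ y = u) := by
  have hall : ∀ i j, coefZ x y u v i j = 0 := by
    intro i j
    rcases le_total i j with hij | hij
    · exact h i j hij
    · rw [coefZ_symm]; exact h j i hij
  have hv : ∀ i, ((v i : ℕ) : ZMod 2) = ((x i : ℕ) : ZMod 2) + ((y i : ℕ) : ZMod 2) + ((u i : ℕ) : ZMod 2) := by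
    intro i
    have H := hall i i
    unfold coefZ at H
    rw [c2_sq, c2_sq, c2_sq, c2_sq] at H
    exact diag4 _ _ _ _ H
  have hab : ∀ i j, (((x i : ℕ) : ZMod 2) + ((y i : ℕ) : ZMod 2)) * (((x j : ℕ) : ZMod 2) + ((u j : ℕ) : ZMod 2))
      = (((x j : ℕ) : ZMod 2) + ((y j : ℕ) : ZMod 2)) * (((x i : ℕ) : ZMod 2) + ((u i : ℕ) : ZMod 2)) := by
    intro i j
    have H := hall i j
    unfold coefZ at H
    rw [hv i, hv j] at H
    exact key6 _ _ _ _ _ _ H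
  by_cases ha : ∀ i, ((x i : ℕ) : ZMod 2) + ((y i : ℕ) : ZMod 2) = 0
  · left
    have hxy : ∀ i, ((x i : ℕ) : ZMod 2) = ((y i : ℕ) : ZMod 2) := by
      intro i; exact addc _ _ (ha i)
    exact ⟨funext fun i => c2_inj _ _ (hxy i),
      funext fun i => c2_inj _ _ (by rw [hv i, l2 _ _ _ (ha i)])⟩
  · push_neg at ha
    obtain ⟨i0, hi0'⟩ := ha
    have hi0 := zmod2_ne_zero _ hi0'
    by_cases hb : ∀ j, ((x j : ℕ) : ZMod 2) + ((u j : ℕ) : ZMod 2) = 0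
    · right; left
      have hxu : ∀ j, ((x j : ℕ) : ZMod 2) = ((u j : ℕ) : ZMod 2) := by
        intro j; exact addc _ _ (hb j)
      refine ⟨funext fun j => c2_inj _ _ (hxu j), funext fun j => c2_inj _ _ ?_⟩
      rw [hv j, l3 _ _ _ (hb j)]
    · push_neg at hb
      obtain ⟨j0, hj0'⟩ := hb
      have hj0 := zmod2_ne_zero _ hj0'
      have h1 := hab i0 j0
      rw [hi0, one_mul] at h1
      obtain ⟨haj0, hbi0⟩ := mul_eq_one2 _ _ (by rw [← h1, hj0])
      have hba : ∀ k, ((x k : ℕ) : ZMod 2) + ((u k : ℕ) : ZMod 2) = ((x k : ℕ) : ZMod 2) + ((y k : ℕ) : ZMod 2) := by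
        intro k
        have H := hab i0 k
        rw [hi0, one_mul, hbi0, mul_one] at H
        exact H
      have hyu : ∀ k, ((y k : ℕ) : ZMod 2) = ((u k : ℕ) : ZMod 2) := fun k =>
        (add_left_cancel (hba k)).symm
      refine Or.inr (Or.inr ⟨funext fun k => c2_inj _ _ ?_, funext fun k => c2_inj _ _ (hyu k)⟩)
      rw [hv k]
      exact (l4 _ _ _ (hyu k)).symm
end RA

namespace RA2
open RA
variable {n : ℕ}

lemma expo_eq (A : Matrix (Fin n) (Fin n) (Fin 2)) (x y u v : Bits n) :
    quadB A x + quadB A y + quadB A u + quadB A v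
      = ∑ i, ∑ j, (A i j : ℕ) * coefN x y u v i j := by
  unfold quadB coefN
  rw [← Finset.sum_add_distrib, ← Finset.sum_add_distrib, ← Finset.sum_add_distrib]
  refine Finset.sum_congr rfl fun i _ => ?_
  rw [← Finset.sum_add_distrib, ← Finset.sum_add_distrib, ← Finset.sum_add_distrib]
  refine Finset.sum_congr rfl fun j _ => ?_
  ring

def flip1 (i0 j0 : Fin n) (A : Matrix (Fin n) (Fin n) (Fin 2)) : Matrix (Fin n) (Fin n) (Fin 2) :=
  Matrix.of fun i j => if i = i0 ∧ j = j0 then A i j + 1 else A i j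

lemma flip1_apply (i0 j0 i j : Fin n) (A : Matrix (Fin n) (Fin n) (Fin 2)) :
    flip1 i0 j0 A i j = if i = i0 ∧ j = j0 then A i j + 1 else A i j := rfl

lemma flip1_mem {i0 j0 : Fin n} (hle : i0 ≤ j0) {A} (hA : A ∈ Bn n) : flip1 i0 j0 A ∈ Bn n := by
  simp only [Bn, Finset.mem_filter] at hA ⊢
  refine ⟨Finset.mem_univ _, fun i j hij => ?_⟩
  rw [flip1_apply]
  split_ifs with h
  · exact absurd (h.1 ▸ h.2 ▸ hij) (not_lt.mpr hle)
  · exact hA.2 i j hij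

lemma flip1_flip1 (i0 j0 : Fin n) (A) : flip1 i0 j0 (flip1 i0 j0 A) = A := by
  funext i j
  simp only [flip1_apply]
  split_ifs with h
  · exact (by decide : ∀ a : Fin 2, a + 1 + 1 = a) _
  · rfl

lemma flip1_ne (i0 j0 : Fin n) (A) : flip1 i0 j0 A ≠ A := by
  intro h
  have := congrFun (congrFun h i0) j0
  rw [flip1_apply, if_pos ⟨rfl, rfl⟩] at this
  exact (by decide : ∀ a : Fin 2, a + 1 ≠ a) _ this

lemma double_ite_sum {M : Type*} [AddCommMonoid M] (f : Fin n → Fin n → M) (i0 j0 : Fin n) :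
    (∑ i, ∑ j, if i = i0 ∧ j = j0 then f i j else 0) = f i0 j0 := by
  rw [Finset.sum_eq_single_of_mem i0 (Finset.mem_univ _)]
  · rw [Finset.sum_eq_single_of_mem j0 (Finset.mem_univ _)]
    · simp
    · intro b _ hb; simp [hb]
  · intro b _ hb; simp [hb]

lemma expo_cast (A : Matrix (Fin n) (Fin n) (Fin 2)) (x y u v : Bits n) :
    ((quadB A x + quadB A y + quadB A u + quadB A v : ℕ) : ZMod 2)
      = ∑ i, ∑ j, ((A i j : ℕ) : ZMod 2) * coefZ x y u v i j := by
  rw [expo_eq]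
  push_cast [coefN_cast]
  rfl

lemma expo_flip_cast {i0 j0 : Fin n} (x y u v : Bits n)
    (hodd : coefZ x y u v i0 j0 = 1) (A : Matrix (Fin n) (Fin n) (Fin 2)) :
    ((quadB (flip1 i0 j0 A) x + quadB (flip1 i0 j0 A) y + quadB (flip1 i0 j0 A) u + quadB (flip1 i0 j0 A) v : ℕ) : ZMod 2)
      = ((quadB A x + quadB A y + quadB A u + quadB A v : ℕ) : ZMod 2) + 1 := by
  rw [expo_cast, expo_cast]
  have hterm : ∀ i j : Fin n, (((flip1 i0 j0 A) i j : ℕ) : ZMod 2) * coefZ x y u v i j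
      = ((A i j : ℕ) : ZMod 2) * coefZ x y u v i j
        + (if i = i0 ∧ j = j0 then coefZ x y u v i j else 0) := by
    intro i j
    rw [flip1_apply]
    split_ifs with h
    · rw [c2_add_one]; ring
    · ring
  calc (∑ i, ∑ j, (((flip1 i0 j0 A) i j : ℕ) : ZMod 2) * coefZ x y u v i j)
      = ∑ i, ∑ j, (((A i j : ℕ) : ZMod 2) * coefZ x y u v i j
          + (if i = i0 ∧ j = j0 then coefZ x y u v i j else 0)) := by
        exact Finset.sum_congr rfl fun i _ => Finset.sum_congr rfl fun j _ => hterm i j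
    _ = (∑ i, ∑ j, ((A i j : ℕ) : ZMod 2) * coefZ x y u v i j)
          + ∑ i, ∑ j, (if i = i0 ∧ j = j0 then coefZ x y u v i j else 0) := by
        rw [← Finset.sum_add_distrib]
        exact Finset.sum_congr rfl fun i _ => Finset.sum_add_distrib
    _ = _ := by rw [double_ite_sum, hodd]

lemma char_sum (x y u v : Bits n) :
    (∑ A ∈ Bn n, (-1:ℂ)^(quadB A x + quadB A y + quadB A u + quadB A v)) =
      if (x = y ∧ u = v) ∨ (x = u ∧ y = v) ∨ (x = v ∧ y = u) then ((Bn n).card : ℂ) else 0 := by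
  by_cases hc : (x = y ∧ u = v) ∨ (x = u ∧ y = v) ∨ (x = v ∧ y = u)
  · rw [if_pos hc]
    have hone : ∀ A ∈ Bn n, (-1:ℂ)^(quadB A x + quadB A y + quadB A u + quadB A v) = 1 := by
      intro A _
      refine Even.neg_one_pow ?_
      rcases hc with ⟨h1, h2⟩ | ⟨h1, h2⟩ | ⟨h1, h2⟩ <;> rw [h1, h2]
      · exact ⟨quadB A y + quadB A v, by ring⟩
      · exact ⟨quadB A u + quadB A v, by ring⟩
      · exact ⟨quadB A v + quadB A u, by ring⟩
    rw [Finset.sum_congr rfl hone]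
    simp
  · rw [if_neg hc]
    have h1 : ¬ ∀ i j : Fin n, i ≤ j → coefZ x y u v i j = 0 := fun h => hc (cond_of_even x y u v h)
    push_neg at h1
    obtain ⟨i0, j0, hle, hne⟩ := h1
    have hodd : coefZ x y u v i0 j0 = 1 := zmod2_ne_zero _ hne
    refine Finset.sum_involution (fun A _ => flip1 i0 j0 A) ?_ ?_ (fun A hA => flip1_mem hle hA)
      (fun A _ => flip1_flip1 i0 j0 A)
    · intro A _
      rw [neg_one_pow_eq, neg_one_pow_eq, expo_flip_cast x y u v hodd A]
      by_cases h : ((quadB A x + quadB A y + quadB A u + quadB A v : ℕ) : ZMod 2) = 0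
      · rw [if_pos h, h, if_neg (by decide : ¬ ((0:ZMod 2) + 1 = 0))]; ring
      · rw [if_neg h, zmod2_ne_zero _ h, if_pos (by decide : ((1:ZMod 2) + 1 = 0))]; ring
    · intro A _ _
      exact flip1_ne i0 j0 A

end RA2

namespace RA3
variable {n : ℕ}

lemma sqrt_mul_self' : ((Real.sqrt (2 ^ n) : ℝ) : ℂ) * ((Real.sqrt (2 ^ n) : ℝ) : ℂ) = (2^n : ℂ) := by
  rw [← Complex.ofReal_mul, Real.mul_self_sqrt (by positivity)]
  norm_cast

lemma sqrt_ne_zero' : ((Real.sqrt (2 ^ n) : ℝ) : ℂ) ≠ 0 := by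
  rw [Complex.ofReal_ne_zero]
  exact ne_of_gt (Real.sqrt_pos.mpr (by positivity))

lemma braket_eq (A : Matrix (Fin n) (Fin n) (Fin 2)) (M : Matrix (Bits n) (Bits n) ℂ) :
    braket (phiReq A) M
      = (∑ x : Bits n, ∑ y : Bits n, (-1:ℂ)^(quadB A x) * (-1:ℂ)^(quadB A y) * M x y)
          / ((2:ℂ)^n) := by
  simp only [braket, dotProduct, Matrix.mulVec, Pi.star_apply]
  rw [Finset.sum_div]
  refine Finset.sum_congr rfl fun x _ => ?_
  rw [Finset.mul_sum, Finset.sum_div]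
  refine Finset.sum_congr rfl fun y _ => ?_
  have hstar : star (phiReq A x) = phiReq A x := by
    simp only [phiReq, star_div₀, star_pow, star_neg, star_one, Complex.star_def,
      Complex.conj_ofReal]
  rw [hstar]
  simp only [phiReq]
  rw [← sqrt_mul_self' (n := n)]
  field_simp

end RA3

namespace RA4
open RA RA2 RA3
variable {n : ℕ}

lemma ite_or3 {P1 P2 P3 : Prop} [Decidable P1] [Decidable P2] [Decidable P3]
    (h12 : P1 → P2 → P3) (h13 : P1 → P3 → P2) (h23 : P2 → P3 → P1) (c w : ℂ) :
    (if P1 ∨ P2 ∨ P3 then c else 0) * w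
      = (if P1 then c else 0) * w + (if P2 then c else 0) * w + (if P3 then c else 0) * w
        - 2 * ((if P1 ∧ P2 then c else 0) * w) := by
  by_cases p1 : P1 <;> by_cases p2 : P2 <;> by_cases p3 : P3 <;> simp_all <;> ring

lemma collapse (c : ℂ) (f g : Matrix (Bits n) (Bits n) ℂ) :
    (∑ x : Bits n, ∑ u : Bits n, ∑ y : Bits n, ∑ v : Bits n,
      (if (x = y ∧ u = v) ∨ (x = u ∧ y = v) ∨ (x = v ∧ y = u) then c else 0) * (f x y * g u v))
    = c * ((∑ x, f x x) * (∑ u, g u u) + (∑ x, ∑ y, f x y * g x y) + (∑ x, ∑ y, f x y * g y x)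
           - 2 * ∑ x, f x x * g x x) := by
  have hpt : ∀ x u y v : Bits n,
      (if (x = y ∧ u = v) ∨ (x = u ∧ y = v) ∨ (x = v ∧ y = u) then c else 0) * (f x y * g u v)
      = (if x = y ∧ u = v then c else 0) * (f x y * g u v)
        + (if x = u ∧ y = v then c else 0) * (f x y * g u v)
        + (if x = v ∧ y = u then c else 0) * (f x y * g u v)
        - 2 * ((if (x = y ∧ u = v) ∧ x = u ∧ y = v then c else 0) * (f x y * g u v)) := by
    intro x u y v
    refine ite_or3 ?_ ?_ ?_ c _
    · rintro ⟨h1, h2⟩ ⟨h3, h4⟩; constructor <;> simp_all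
    · rintro ⟨h1, h2⟩ ⟨h3, h4⟩; constructor <;> simp_all
    · rintro ⟨h1, h2⟩ ⟨h3, h4⟩; constructor <;> simp_all
  have split4 : (∑ x : Bits n, ∑ u : Bits n, ∑ y : Bits n, ∑ v : Bits n,
      (if (x = y ∧ u = v) ∨ (x = u ∧ y = v) ∨ (x = v ∧ y = u) then c else 0) * (f x y * g u v))
      = (∑ x : Bits n, ∑ u : Bits n, ∑ y : Bits n, ∑ v : Bits n,
          (if x = y ∧ u = v then c else 0) * (f x y * g u v))
        + (∑ x : Bits n, ∑ u : Bits n, ∑ y : Bits n, ∑ v : Bits n,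
          (if x = u ∧ y = v then c else 0) * (f x y * g u v))
        + (∑ x : Bits n, ∑ u : Bits n, ∑ y : Bits n, ∑ v : Bits n,
          (if x = v ∧ y = u then c else 0) * (f x y * g u v))
        - 2 * (∑ x : Bits n, ∑ u : Bits n, ∑ y : Bits n, ∑ v : Bits n,
          (if (x = y ∧ u = v) ∧ x = u ∧ y = v then c else 0) * (f x y * g u v)) := by
    rw [Finset.mul_sum, ← Finset.sum_add_distrib, ← Finset.sum_add_distrib,
      ← Finset.sum_sub_distrib]
    refine Finset.sum_congr rfl fun x _ => ?_
    rw [Finset.mul_sum, ← Finset.sum_add_distrib, ← Finset.sum_add_distrib,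
      ← Finset.sum_sub_distrib]
    refine Finset.sum_congr rfl fun u _ => ?_
    rw [Finset.mul_sum, ← Finset.sum_add_distrib, ← Finset.sum_add_distrib,
      ← Finset.sum_sub_distrib]
    refine Finset.sum_congr rfl fun y _ => ?_
    rw [Finset.mul_sum, ← Finset.sum_add_distrib, ← Finset.sum_add_distrib,
      ← Finset.sum_sub_distrib]
    exact Finset.sum_congr rfl fun v _ => hpt x u y v
  rw [split4]
  have e1 : (∑ x : Bits n, ∑ u : Bits n, ∑ y : Bits n, ∑ v : Bits n,
      (if x = y ∧ u = v then c else 0) * (f x y * g u v))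
      = c * ((∑ x, f x x) * (∑ u, g u u)) := by
    simp [ite_and, Finset.sum_ite_eq, Finset.sum_ite_eq',
      ite_mul, zero_mul, Finset.mul_sum, Finset.sum_mul, mul_ite, mul_zero]
    rw [Finset.sum_comm]
  have e2 : (∑ x : Bits n, ∑ u : Bits n, ∑ y : Bits n, ∑ v : Bits n,
      (if x = u ∧ y = v then c else 0) * (f x y * g u v))
      = c * (∑ x, ∑ y, f x y * g x y) := by
    simp [ite_and, Finset.sum_ite_eq, Finset.sum_ite_eq',
      ite_mul, zero_mul, Finset.mul_sum, Finset.sum_mul, mul_ite, mul_zero]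
  have e3 : (∑ x : Bits n, ∑ u : Bits n, ∑ y : Bits n, ∑ v : Bits n,
      (if x = v ∧ y = u then c else 0) * (f x y * g u v))
      = c * (∑ x, ∑ y, f x y * g y x) := by
    simp [ite_and, Finset.sum_ite_eq, Finset.sum_ite_eq',
      ite_mul, zero_mul, Finset.mul_sum, Finset.sum_mul, mul_ite, mul_zero]
  have e4 : (∑ x : Bits n, ∑ u : Bits n, ∑ y : Bits n, ∑ v : Bits n,
      (if (x = y ∧ u = v) ∧ x = u ∧ y = v then c else 0) * (f x y * g u v))
      = c * (∑ x, f x x * g x x) := by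
    simp [ite_and, Finset.sum_ite_eq, Finset.sum_ite_eq',
      ite_mul, zero_mul, Finset.mul_sum, Finset.sum_mul, mul_ite, mul_zero]
  rw [e1, e2, e3, e4]
  ring

lemma comm3 {α β γ M : Type*} [AddCommMonoid M] (s : Finset α) (t : Finset β) (r : Finset γ)
    (F : α → β → γ → M) :
    ∑ a ∈ s, ∑ b ∈ t, ∑ c ∈ r, F a b c = ∑ b ∈ t, ∑ c ∈ r, ∑ a ∈ s, F a b c := by
  rw [Finset.sum_comm]
  exact Finset.sum_congr rfl fun b _ => Finset.sum_comm

lemma comm4 {α β γ δ M : Type*} [AddCommMonoid M] (s : Finset α) (t : Finset β) (r : Finset γ)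
    (w : Finset δ) (F : α → β → γ → δ → M) :
    ∑ a ∈ s, ∑ b ∈ t, ∑ c ∈ r, ∑ d ∈ w, F a b c d
      = ∑ b ∈ t, ∑ c ∈ r, ∑ d ∈ w, ∑ a ∈ s, F a b c d := by
  rw [Finset.sum_comm]
  exact Finset.sum_congr rfl fun b _ => comm3 s r w (fun a => F a b)

lemma comm5 {α β γ δ ε M : Type*} [AddCommMonoid M] {s : Finset α} {t : Finset β} {r : Finset γ}
    {w : Finset δ} {e : Finset ε} {F : α → β → γ → δ → ε → M} :
    ∑ a ∈ s, ∑ b ∈ t, ∑ c ∈ r, ∑ d ∈ w, ∑ x ∈ e, F a b c d x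
      = ∑ b ∈ t, ∑ c ∈ r, ∑ d ∈ w, ∑ x ∈ e, ∑ a ∈ s, F a b c d x := by
  rw [Finset.sum_comm]
  exact Finset.sum_congr rfl fun b _ => comm4 s r w e (fun a => F a b)

lemma key_sum (f g : Matrix (Bits n) (Bits n) ℂ) :
    (∑ A ∈ Bn n, braket (phiReq A) f * braket (phiReq A) g)
      = ((Bn n).card : ℂ) * ((∑ x, f x x) * (∑ u, g u u) + (∑ x, ∑ y, f x y * g x y)
            + (∑ x, ∑ y, f x y * g y x) - 2 * ∑ x, f x x * g x x)
          / ((2:ℂ)^n * (2:ℂ)^n) := by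
  have h1 : ∀ A ∈ Bn n, braket (phiReq A) f * braket (phiReq A) g
      = (∑ x : Bits n, ∑ u : Bits n, ∑ y : Bits n, ∑ v : Bits n,
          (-1:ℂ)^(quadB A x + quadB A y + quadB A u + quadB A v) * (f x y * g u v))
          / ((2:ℂ)^n * (2:ℂ)^n) := by
    intro A _
    rw [braket_eq, braket_eq, div_mul_div_comm, Finset.sum_mul_sum]
    congr 1
    refine Finset.sum_congr rfl fun x _ => ?_
    refine Finset.sum_congr rfl fun u _ => ?_
    rw [Finset.sum_mul_sum]
    refine Finset.sum_congr rfl fun y _ => ?_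
    refine Finset.sum_congr rfl fun v _ => ?_
    rw [pow_add, pow_add, pow_add]
    ring
  rw [Finset.sum_congr rfl h1, ← Finset.sum_div]
  congr 1
  rw [comm5]
  exact Eq.trans
    (Finset.sum_congr rfl fun x _ => Finset.sum_congr rfl fun u _ =>
      Finset.sum_congr rfl fun y _ => Finset.sum_congr rfl fun v _ => by
        rw [← Finset.sum_mul, char_sum])
    (collapse _ f g)

end RA4

/-- STATEMENT 9: the RESPOVM + computational-basis decomposition of `tr(ρ O)` for a
real symmetric observable `O`. -/theorem respovm_tomography_identity (n : ℕ) (hn : 1 ≤ n)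
    (ρ O : Matrix (Bits n) (Bits n) ℂ) (hρ : ρ.trace = 1)
    (hOreal : ∀ x y : Bits n, (O x y).im = 0) (hOsymm : O.transpose = O) :
    (ρ * O).trace =
      ((2 : ℂ) ^ (2 * n - 1) / ((Bn n).card : ℂ)) *
          (∑ A ∈ Bn n, braket (phiReq A) ρ * braket (phiReq A) O)
        + (∑ x : Bits n, ρ x x * O x x) - (1 / 2 : ℂ) * O.trace := by
  have hOs : ∀ a b : Bits n, O a b = O b a := by
    intro a b
    have h := congrFun (congrFun hOsymm b) a
    rw [Matrix.transpose_apply] at h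
    exact h
  have htr : (ρ * O).trace = ∑ x : Bits n, ∑ y : Bits n, ρ x y * O y x := by
    simp [Matrix.trace, Matrix.mul_apply, Matrix.diag]
  have h2 : (∑ x : Bits n, ∑ y : Bits n, ρ x y * O x y)
      = ∑ x : Bits n, ∑ y : Bits n, ρ x y * O y x :=
    Finset.sum_congr rfl fun x _ => Finset.sum_congr rfl fun y _ => by rw [hOs x y]
  have hρtr : (∑ x : Bits n, ρ x x) = 1 := by
    simpa [Matrix.trace, Matrix.diag] using hρ
  have hOtr : (∑ u : Bits n, O u u) = O.trace := by simp [Matrix.trace, Matrix.diag]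
  have hc : ((Bn n).card : ℂ) ≠ 0 := by
    have : (0 : Matrix (Fin n) (Fin n) (Fin 2)) ∈ Bn n := by
      simp [Bn]
    exact Nat.cast_ne_zero.mpr (Finset.card_ne_zero_of_mem this)
  have hpne : ((2:ℂ)^n) ≠ 0 := pow_ne_zero _ two_ne_zero
  have h21 : (2:ℂ)^(2*n-1) = (2:ℂ)^n * (2:ℂ)^n / 2 := by
    rw [eq_div_iff (two_ne_zero), ← pow_succ, ← pow_add]
    congr 1
    omega
  rw [RA4.key_sum ρ O, hρtr, hOtr, h2, ← htr, h21]
  field_simp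
  ring
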